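/- arXiv:1902.02776 — 2 statements merged into one kernel-verified Lean document; each statement's English description precedes it below -/
import Mathlib

section
/- In the beta-binomial regression model with no covariates for the mean (θ = (β0, β0*, β*)) and logit links, if all observed counts are zero (W_i = 0 for all i), then the supremum over β0 of the log-likelihood equals 0, attained in the limit β0 → −∞. -/
open Filter

noncomputable def betaFun (x y : ℝ) : ℝ :=
  Real.Gamma x * Real.Gamma y / Real.Gamma (x + y)

lemma gamma_add_nat (x : ℝ) (hx : 0 < x) (M : ℕ) :
    Real.Gamma (x + M) = Real.Gamma x * ∏ j ∈ Finset.range M, (x + j) := by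
  induction M with
  | zero => simp
  | succ m ih =>
    have h : (x + ((m : ℕ)+1 : ℕ) : ℝ) = (x + m) + 1 := by push_cast; ring
    rw [h, Real.Gamma_add_one (by positivity), ih, Finset.prod_range_succ]
    push_cast; ring

/-- Lemma C.1: in the beta-binomial regression model with no covariates for the mean,
parameters `θ = (β0, β0*, β*)` and logit links, where
`a_{1,i} = e^{-β0* - X_i*ᵀβ*}/(1 + e^{-β0})` and `a_{2,i} = e^{-β0* - X_i*ᵀβ*}/(1 + e^{β0})`,
if all observed counts are zero, then the supremum over `β0` of the log-likelihood
equals `0`, attained in the limit `β0 → -∞`. -/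
theorem supLoglikAllZeroCounts (n k : ℕ) (M W : Fin n → ℕ) (hW : ∀ i, W i = 0)
    (Xs : Fin n → Fin k → ℝ) (β0star : ℝ) (βstar : Fin k → ℝ)
    (a1 a2 : ℝ → Fin n → ℝ)
    (ha1 : ∀ β0 i, a1 β0 i =
      Real.exp (-(β0star + ∑ j, Xs i j * βstar j)) / (1 + Real.exp (-β0)))
    (ha2 : ∀ β0 i, a2 β0 i =
      Real.exp (-(β0star + ∑ j, Xs i j * βstar j)) / (1 + Real.exp β0))
    (ℓ : ℝ → ℝ)
    (hℓ : ∀ β0, ℓ β0 = ∑ i, Real.log (((M i).choose (W i) : ℝ) *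
      betaFun (a1 β0 i + W i) (a2 β0 i + (M i : ℝ) - W i) / betaFun (a1 β0 i) (a2 β0 i))) :
    IsLUB (Set.range ℓ) 0 ∧ Tendsto ℓ atBot (nhds 0) := by
  set c : Fin n → ℝ := fun i => β0star + ∑ j, Xs i j * βstar j with hc
  set s : Fin n → ℝ := fun i => Real.exp (-(c i)) with hs
  have hspos : ∀ i, 0 < s i := fun i => Real.exp_pos _
  have ha2pos : ∀ β0 i, 0 < a2 β0 i := by
    intro β0 i; rw [ha2]; positivity
  have ha2lt : ∀ β0 i, a2 β0 i < s i := by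
    intro β0 i; rw [ha2]
    rw [div_lt_iff₀ (by positivity)]
    have h1 := Real.exp_pos β0
    have h2 := Real.exp_pos (-(c i))
    nlinarith
  have hsumas : ∀ β0 i, a1 β0 i + a2 β0 i = s i := by
    intro β0 i
    rw [ha1, ha2]
    show _ = Real.exp (-(β0star + ∑ j, Xs i j * βstar j))
    generalize Real.exp (-(β0star + ∑ j, Xs i j * βstar j)) = E
    rw [Real.exp_neg]
    have h1 : Real.exp β0 ≠ 0 := (Real.exp_pos β0).ne'
    have h2 : (0:ℝ) < 1 + Real.exp β0 := by positivity
    field_simp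
    ring
  have key : ∀ β0, ℓ β0 = ∑ i, ∑ j ∈ Finset.range (M i),
      (Real.log (a2 β0 i + j) - Real.log (s i + j)) := by
    intro β0
    rw [hℓ]
    apply Finset.sum_congr rfl
    intro i _
    rw [hW i]
    simp only [Nat.choose_zero_right, Nat.cast_zero, Nat.cast_one, add_zero, sub_zero, one_mul]
    have ha1pos : 0 < a1 β0 i := by rw [ha1]; positivity
    have gp2 : 0 < ∏ j ∈ Finset.range (M i), (s i + j) := by
      apply Finset.prod_pos; intro j _
      have : (0:ℝ) ≤ (j:ℝ) := Nat.cast_nonneg j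
      have := hspos i; linarith
    have gp1 : 0 < ∏ j ∈ Finset.range (M i), (a2 β0 i + j) := by
      apply Finset.prod_pos; intro j _
      have : (0:ℝ) ≤ (j:ℝ) := Nat.cast_nonneg j
      have := ha2pos β0 i; linarith
    have hprod : betaFun (a1 β0 i) (a2 β0 i + M i) / betaFun (a1 β0 i) (a2 β0 i)
        = (∏ j ∈ Finset.range (M i), (a2 β0 i + j)) / (∏ j ∈ Finset.range (M i), (s i + j)) := by
      unfold betaFun
      have e1 : a1 β0 i + (a2 β0 i + (M i : ℝ)) = s i + (M i : ℝ) := by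
        rw [← hsumas β0 i]; ring
      rw [e1, hsumas β0 i, gamma_add_nat _ (ha2pos β0 i), gamma_add_nat _ (hspos i)]
      have g1 := Real.Gamma_pos_of_pos ha1pos
      have g2 := Real.Gamma_pos_of_pos (ha2pos β0 i)
      have g3 := Real.Gamma_pos_of_pos (hspos i)
      field_simp
    rw [hprod, Real.log_div (ne_of_gt gp1) (ne_of_gt gp2),
      Real.log_prod (fun j hj => by
        have : (0:ℝ) ≤ (j:ℝ) := Nat.cast_nonneg j
        have := ha2pos β0 i; positivity),
      Real.log_prod (fun j hj => by
        have : (0:ℝ) ≤ (j:ℝ) := Nat.cast_nonneg j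
        have := hspos i; positivity),
      ← Finset.sum_sub_distrib]
  have hle : ∀ β0, ℓ β0 ≤ 0 := by
    intro β0; rw [key]
    apply Finset.sum_nonpos; intro i _
    apply Finset.sum_nonpos; intro j _
    have h1 : 0 < a2 β0 i + j := by
      have : (0:ℝ) ≤ (j:ℝ) := Nat.cast_nonneg j
      have := ha2pos β0 i; linarith
    have h2 : a2 β0 i + j ≤ s i + j := by linarith [ha2lt β0 i]
    have := Real.log_le_log h1 h2
    linarith
  have ht2 : ∀ i, Tendsto (fun β0 => a2 β0 i) atBot (nhds (s i)) := by
    intro i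
    have heq : (fun β0 => a2 β0 i) = fun β0 => Real.exp (-(c i)) / (1 + Real.exp β0) := by
      funext β0; rw [ha2]
    rw [heq]
    have h1 : Tendsto (fun β0 : ℝ => 1 + Real.exp β0) atBot (nhds 1) := by
      simpa using (tendsto_const_nhds.add Real.tendsto_exp_atBot)
    have h2 := (tendsto_const_nhds (x := Real.exp (-(c i)))).div h1 one_ne_zero
    rw [div_one] at h2
    exact h2
  have htend : Tendsto ℓ atBot (nhds 0) := by
    have hfun : ℓ = fun β0 => ∑ i, ∑ j ∈ Finset.range (M i),
        (Real.log (a2 β0 i + j) - Real.log (s i + j)) := funext key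
    rw [hfun]
    have h0 : (0:ℝ) = ∑ i : Fin n, ∑ j ∈ Finset.range (M i), (0:ℝ) := by simp
    rw [h0]
    apply tendsto_finset_sum
    intro i _
    apply tendsto_finset_sum
    intro j _
    have hne : s i + (j:ℝ) ≠ 0 := by
      have : (0:ℝ) ≤ (j:ℝ) := Nat.cast_nonneg j
      have := hspos i; positivity
    have hlog : Tendsto (fun β0 => Real.log (a2 β0 i + j)) atBot (nhds (Real.log (s i + j))) := by
      exact (Real.continuousAt_log hne).tendsto.comp ((ht2 i).add tendsto_const_nhds)
    simpa using hlog.sub (tendsto_const_nhds (α := ℝ) (x := Real.log (s i + j)))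
  refine ⟨⟨?_, ?_⟩, htend⟩
  · rintro x ⟨β0, rfl⟩; exact hle β0
  · intro b hb
    exact le_of_tendsto htend (Filter.Eventually.of_forall (fun β0 => hb (Set.mem_range_self β0)))
end

section
/- Consider the beta-binomial regression model with a single binary covariate X_i = X_i* ∈ {0,1} used for both the mean and overdispersion, logit links, and parameters (β0, β1, β0*, β1*). If Σ_{i : X_i = 0} W_i = 0 and Σ_{i : X_i = 1} W_i > 0, then the likelihood ratio test statistic for H0: β1* = 0, namely 2(sup_{β0,β1,β0*,β1*} ℓ − sup_{β0,β1,β0*} ℓ|_{β1*=0}), equals 0. -/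
open Filter Finset

/-- The logistic function. -/
noncomputable def logistic (y : ℝ) : ℝ := Real.exp y / (1 + Real.exp y)

/-- Beta-binomial log-likelihood with a single binary covariate `X_i = X_i*` used
for both the mean and overdispersion, logit links, parameters `(β0, β1, β0*, β1*)`:
`μ_i = logistic(β0 + β1 X_i)`, `φ_i = logistic(β0* + β1* X_i)`,
`a_{1,i} = μ_i(1-φ_i)/φ_i`, `a_{2,i} = (1-μ_i)(1-φ_i)/φ_i`. -/
noncomputable def ellBB (n : ℕ) (M W : Fin n → ℕ) (X : Fin n → ℝ)
    (β0 β1 β0s β1s : ℝ) : ℝ :=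
  ∑ i, Real.log (((M i).choose (W i) : ℝ) *
    betaFun (logistic (β0 + β1 * X i) * (1 - logistic (β0s + β1s * X i)) /
        logistic (β0s + β1s * X i) + W i)
      ((1 - logistic (β0 + β1 * X i)) * (1 - logistic (β0s + β1s * X i)) /
        logistic (β0s + β1s * X i) + (M i : ℝ) - W i) /
    betaFun (logistic (β0 + β1 * X i) * (1 - logistic (β0s + β1s * X i)) /
        logistic (β0s + β1s * X i))
      ((1 - logistic (β0 + β1 * X i)) * (1 - logistic (β0s + β1s * X i)) /
        logistic (β0s + β1s * X i)))

/-! ### Auxiliary lemmas -/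

lemma logistic_pos (t : ℝ) : 0 < logistic t :=
  div_pos (Real.exp_pos t) (by positivity)

lemma logistic_lt_one (t : ℝ) : logistic t < 1 := by
  rw [logistic, div_lt_one (by positivity)]
  linarith [Real.exp_pos t]

/-- One summand of `ellBB`. -/
noncomputable def bbTerm (p q : ℝ) (m w : ℕ) : ℝ :=
  Real.log ((m.choose w : ℝ) *
    betaFun (logistic p * (1 - logistic q) / logistic q + w)
      ((1 - logistic p) * (1 - logistic q) / logistic q + (m : ℝ) - w) /
    betaFun (logistic p * (1 - logistic q) / logistic q)
      ((1 - logistic p) * (1 - logistic q) / logistic q))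

lemma ellBB_eq (n : ℕ) (M W : Fin n → ℕ) (X : Fin n → ℝ) (a b c d : ℝ) :
    ellBB n M W X a b c d = ∑ i, bbTerm (a + b * X i) (c + d * X i) (M i) (W i) := rfl

lemma betaFun_pos {x y : ℝ} (hx : 0 < x) (hy : 0 < y) : 0 < betaFun x y :=
  div_pos (mul_pos (Real.Gamma_pos_of_pos hx) (Real.Gamma_pos_of_pos hy))
    (Real.Gamma_pos_of_pos (by linarith))

lemma Gamma_add_nat (x : ℝ) (hx : 0 < x) :
    ∀ m : ℕ, Real.Gamma (x + m) = Real.Gamma x * ∏ k ∈ Finset.range m, (x + k)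
  | 0 => by simp
  | (m + 1) => by
    have h : x + ((m : ℝ) + 1) = (x + m) + 1 := by ring
    have hne : x + (m : ℝ) ≠ 0 := by positivity
    push_cast
    rw [h, Real.Gamma_add_one hne]
    have := Gamma_add_nat x hx m
    rw [this, Finset.prod_range_succ]
    ring

lemma beta_shift_le (x y : ℝ) (hx : 0 < x) (hy : 0 < y) (U V : ℕ) :
    betaFun (x + U) (y + V) ≤ betaFun x y := by
  have hxy : 0 < x + y := by linarith
  have h1 := Gamma_add_nat x hx U
  have h2 := Gamma_add_nat y hy V
  have h3 := Gamma_add_nat (x + y) hxy (U + V)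
  have harg : (x + (U : ℝ)) + (y + (V : ℝ)) = (x + y) + ((U + V : ℕ) : ℝ) := by
    push_cast; ring
  unfold betaFun
  rw [harg, h1, h2, h3]
  have hsplit : (∏ k ∈ Finset.range (U + V), (x + y + (k : ℝ)))
      = (∏ k ∈ Finset.range U, (x + y + (k : ℝ))) *
        ∏ k ∈ Finset.range V, (x + y + ((U + k : ℕ) : ℝ)) :=
    Finset.prod_range_add (fun k => x + y + (k : ℝ)) U V
  have hP1 : (∏ k ∈ Finset.range U, (x + (k : ℝ))) ≤ ∏ k ∈ Finset.range U, (x + y + (k : ℝ)) :=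
    Finset.prod_le_prod (fun k _ => by positivity) (fun k _ => by linarith)
  have hP2 : (∏ k ∈ Finset.range V, (y + (k : ℝ))) ≤
      ∏ k ∈ Finset.range V, (x + y + ((U + k : ℕ) : ℝ)) :=
    Finset.prod_le_prod (fun k _ => by positivity)
      (fun k _ => by push_cast; have : (0:ℝ) ≤ U := Nat.cast_nonneg U; linarith)
  have hP3pos : 0 < ∏ k ∈ Finset.range (U + V), (x + y + (k : ℝ)) :=
    Finset.prod_pos fun k _ => by positivity
  have hprod : (∏ k ∈ Finset.range U, (x + (k : ℝ))) * ∏ k ∈ Finset.range V, (y + (k : ℝ))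
      ≤ ∏ k ∈ Finset.range (U + V), (x + y + (k : ℝ)) := by
    rw [hsplit]
    exact mul_le_mul hP1 hP2 (Finset.prod_nonneg fun k _ => by positivity)
      (Finset.prod_nonneg fun k _ => by positivity)
  have hΓx := Real.Gamma_pos_of_pos hx
  have hΓy := Real.Gamma_pos_of_pos hy
  have hΓxy := Real.Gamma_pos_of_pos hxy
  have key : Real.Gamma x * (∏ k ∈ Finset.range U, (x + (k:ℝ))) *
      (Real.Gamma y * ∏ k ∈ Finset.range V, (y + (k:ℝ))) /
      (Real.Gamma (x + y) * ∏ k ∈ Finset.range (U + V), (x + y + (k:ℝ)))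
      = (Real.Gamma x * Real.Gamma y / Real.Gamma (x + y)) *
        (((∏ k ∈ Finset.range U, (x + (k:ℝ))) * ∏ k ∈ Finset.range V, (y + (k:ℝ))) /
          ∏ k ∈ Finset.range (U + V), (x + y + (k:ℝ))) := by
    field_simp
  rw [key]
  have h1le : ((∏ k ∈ Finset.range U, (x + (k:ℝ))) * ∏ k ∈ Finset.range V, (y + (k:ℝ))) /
      (∏ k ∈ Finset.range (U + V), (x + y + (k:ℝ))) ≤ 1 :=
    (div_le_one hP3pos).mpr hprod
  have hc : 0 ≤ Real.Gamma x * Real.Gamma y / Real.Gamma (x + y) := by positivity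
  calc Real.Gamma x * Real.Gamma y / Real.Gamma (x + y) *
        (((∏ k ∈ Finset.range U, (x + (k:ℝ))) * ∏ k ∈ Finset.range V, (y + (k:ℝ))) /
          ∏ k ∈ Finset.range (U + V), (x + y + (k:ℝ)))
      ≤ Real.Gamma x * Real.Gamma y / Real.Gamma (x + y) * 1 :=
        mul_le_mul_of_nonneg_left h1le hc
    _ = Real.Gamma x * Real.Gamma y / Real.Gamma (x + y) := mul_one _

lemma bbTerm_le (p q : ℝ) (m w : ℕ) (hw : w ≤ m) :
    bbTerm p q m w ≤ Real.log (m.choose w) := by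
  have hφ := logistic_pos q
  have hφ1 := logistic_lt_one q
  have hμ := logistic_pos p
  have hμ1 := logistic_lt_one p
  set x := logistic p * (1 - logistic q) / logistic q with hxdef
  set y := (1 - logistic p) * (1 - logistic q) / logistic q with hydef
  have hx : 0 < x := div_pos (mul_pos hμ (by linarith)) hφ
  have hy : 0 < y := div_pos (mul_pos (by linarith) (by linarith)) hφ
  have hcast : y + (m : ℝ) - (w : ℝ) = y + ((m - w : ℕ) : ℝ) := by
    rw [Nat.cast_sub hw]; ring
  unfold bbTerm
  rw [← hxdef, ← hydef, hcast]
  have hBle : betaFun (x + w) (y + ((m - w : ℕ) : ℝ)) ≤ betaFun x y :=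
    beta_shift_le x y hx hy w (m - w)
  have hxw : 0 < x + (w : ℝ) := by positivity
  have hyw : 0 < y + ((m - w : ℕ) : ℝ) := by positivity
  have hBnpos : 0 < betaFun (x + w) (y + ((m - w : ℕ) : ℝ)) := betaFun_pos hxw hyw
  have hBdpos : 0 < betaFun x y := betaFun_pos hx hy
  have hc : (1 : ℝ) ≤ ((m.choose w : ℕ) : ℝ) := by
    exact_mod_cast Nat.one_le_iff_ne_zero.mpr (Nat.choose_pos hw).ne'
  have hcpos : (0 : ℝ) < (m.choose w : ℝ) := by linarith
  apply Real.log_le_log (by positivity)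
  calc ((m.choose w : ℕ) : ℝ) * betaFun (x + w) (y + ((m - w : ℕ) : ℝ)) / betaFun x y
      ≤ ((m.choose w : ℕ) : ℝ) * betaFun x y / betaFun x y :=
        div_le_div₀ (by positivity) (mul_le_mul_of_nonneg_left hBle hcpos.le) hBdpos le_rfl
    _ = ((m.choose w : ℕ) : ℝ) := by field_simp

lemma log_beta_ratio (x y : ℝ) (hx : 0 < x) (hy : 0 < y) (m : ℕ) :
    Real.log (betaFun x (y + m) / betaFun x y)
      = ∑ k ∈ Finset.range m, (Real.log (y + k) - Real.log (x + y + k)) := by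
  have hxy : 0 < x + y := by linarith
  have h2 := Gamma_add_nat y hy m
  have harg : x + (y + (m : ℝ)) = (x + y) + (m : ℝ) := by ring
  have h3 := Gamma_add_nat (x + y) hxy m
  have hΓx := Real.Gamma_pos_of_pos hx
  have hΓy := Real.Gamma_pos_of_pos hy
  have hΓxy := Real.Gamma_pos_of_pos hxy
  have hPy : 0 < ∏ k ∈ Finset.range m, (y + (k : ℝ)) :=
    Finset.prod_pos fun k _ => by positivity
  have hPxy : 0 < ∏ k ∈ Finset.range m, (x + y + (k : ℝ)) :=
    Finset.prod_pos fun k _ => by positivity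
  have key : betaFun x (y + m) / betaFun x y
      = (∏ k ∈ Finset.range m, (y + (k : ℝ))) / ∏ k ∈ Finset.range m, (x + y + (k : ℝ)) := by
    unfold betaFun
    rw [harg, h2, h3]
    field_simp
  have l1 : Real.log (∏ k ∈ Finset.range m, (y + (k : ℝ)))
      = ∑ k ∈ Finset.range m, Real.log (y + (k : ℝ)) :=
    Real.log_prod (fun k _ => by positivity)
  have l2 : Real.log (∏ k ∈ Finset.range m, (x + y + (k : ℝ)))
      = ∑ k ∈ Finset.range m, Real.log (x + y + (k : ℝ)) :=
    Real.log_prod (fun k _ => by positivity)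
  rw [key, Real.log_div hPy.ne' hPxy.ne', l1, l2, ← Finset.sum_sub_distrib]

lemma logistic_tendsto : Tendsto logistic atBot (nhds 0) := by
  have h := Real.tendsto_exp_atBot
  have h2 : Tendsto (fun t => Real.exp t / (1 + Real.exp t)) atBot (nhds (0 / (1 + 0))) :=
    h.div (tendsto_const_nhds.add h) (by norm_num)
  rw [show logistic = fun t => Real.exp t / (1 + Real.exp t) from rfl]
  simpa using h2

lemma bbTerm_zero_tendsto (q : ℝ) (m : ℕ) :
    Tendsto (fun p => bbTerm p q m 0) atBot (nhds 0) := by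
  have hφ := logistic_pos q
  have hφ1 := logistic_lt_one q
  have hr : 0 < (1 - logistic q) / logistic q := by
    have : 0 < 1 - logistic q := by linarith
    positivity
  have heq : ∀ p, bbTerm p q m 0 =
      ∑ k ∈ Finset.range m,
        (Real.log ((1 - logistic p) * (1 - logistic q) / logistic q + k)
          - Real.log (logistic p * (1 - logistic q) / logistic q +
              (1 - logistic p) * (1 - logistic q) / logistic q + k)) := by
    intro p
    have hμ := logistic_pos p
    have hμ1 := logistic_lt_one p
    have hx : 0 < logistic p * (1 - logistic q) / logistic q :=
      div_pos (mul_pos hμ (by linarith)) hφ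
    have hy : 0 < (1 - logistic p) * (1 - logistic q) / logistic q :=
      div_pos (mul_pos (by linarith) (by linarith)) hφ
    have h1 : bbTerm p q m 0 = Real.log
        (betaFun (logistic p * (1 - logistic q) / logistic q)
          ((1 - logistic p) * (1 - logistic q) / logistic q + m) /
        betaFun (logistic p * (1 - logistic q) / logistic q)
          ((1 - logistic p) * (1 - logistic q) / logistic q)) := by
      unfold bbTerm
      norm_num
    rw [h1, log_beta_ratio _ _ hx hy m]
  simp only [heq]
  have hmain : Tendsto (fun p => ∑ k ∈ Finset.range m,
      (Real.log ((1 - logistic p) * (1 - logistic q) / logistic q + k)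
        - Real.log (logistic p * (1 - logistic q) / logistic q +
            (1 - logistic p) * (1 - logistic q) / logistic q + k))) atBot
      (nhds (∑ _k ∈ Finset.range m, (0 : ℝ))) := by
    apply tendsto_finset_sum
    intro k _
    have hx : Tendsto (fun p => logistic p * (1 - logistic q) / logistic q) atBot (nhds 0) := by
      have := (logistic_tendsto.mul_const (1 - logistic q)).div_const (logistic q)
      simpa using this
    have hy : Tendsto (fun p => (1 - logistic p) * (1 - logistic q) / logistic q) atBot
        (nhds ((1 - logistic q) / logistic q)) := by
      have h' : Tendsto (fun p => (1 - logistic p) * (1 - logistic q) / logistic q) atBot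
          (nhds ((1 - 0) * (1 - logistic q) / logistic q)) :=
        (((tendsto_const_nhds (x := (1:ℝ))).sub logistic_tendsto).mul_const
          (1 - logistic q)).div_const (logistic q)
      simpa using h'
    have hyk : Tendsto (fun p => (1 - logistic p) * (1 - logistic q) / logistic q + (k : ℝ))
        atBot (nhds ((1 - logistic q) / logistic q + k)) := hy.add tendsto_const_nhds
    have hxyk : Tendsto (fun p => logistic p * (1 - logistic q) / logistic q +
        (1 - logistic p) * (1 - logistic q) / logistic q + (k : ℝ)) atBot
        (nhds (0 + (1 - logistic q) / logistic q + k)) :=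
      (hx.add hy).add tendsto_const_nhds
    have hpos : (0 : ℝ) < (1 - logistic q) / logistic q + k := by positivity
    have hl1 : Tendsto (fun p => Real.log ((1 - logistic p) * (1 - logistic q) / logistic q + k))
        atBot (nhds (Real.log ((1 - logistic q) / logistic q + k))) :=
      (Real.continuousAt_log hpos.ne').tendsto.comp hyk
    have hl2 : Tendsto (fun p => Real.log (logistic p * (1 - logistic q) / logistic q +
        (1 - logistic p) * (1 - logistic q) / logistic q + k))
        atBot (nhds (Real.log (0 + (1 - logistic q) / logistic q + k))) := by
      refine (Real.continuousAt_log ?_).tendsto.comp hxyk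
      rw [zero_add]; exact hpos.ne'
    have := hl1.sub hl2
    rw [zero_add] at this
    simpa using this
  simpa using hmain

/-- Theorem C.2: with a binary covariate, if the group with `X_i = 0` has all-zero
counts and the group with `X_i = 1` has positive total count, the likelihood ratio
test statistic for `H0 : β1* = 0` equals `0`. -/
theorem lrtZeroCountGroup (n : ℕ) (M W : Fin n → ℕ) (X : Fin n → ℝ)
    (hX : ∀ i, X i = 0 ∨ X i = 1)
    (hWM : ∀ i, W i ≤ M i)
    (h0 : ∀ i, X i = 0 → W i = 0)
    (h1 : ∃ i, X i = 1 ∧ 0 < W i) :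
    2 * (sSup {y : ℝ | ∃ β0 β1 β0s β1s : ℝ, ellBB n M W X β0 β1 β0s β1s = y} -
      sSup {y : ℝ | ∃ β0 β1 β0s : ℝ, ellBB n M W X β0 β1 β0s 0 = y}) = 0 := by
  classical
  set A := {y : ℝ | ∃ β0 β1 β0s β1s : ℝ, ellBB n M W X β0 β1 β0s β1s = y} with hA
  set B := {y : ℝ | ∃ β0 β1 β0s : ℝ, ellBB n M W X β0 β1 β0s 0 = y} with hB
  have hBA : B ⊆ A := by
    rintro y ⟨a, b, c, h⟩
    exact ⟨a, b, c, 0, h⟩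
  have hAne : A.Nonempty := ⟨ellBB n M W X 0 0 0 0, 0, 0, 0, 0, rfl⟩
  have hBne : B.Nonempty := ⟨ellBB n M W X 0 0 0 0, 0, 0, 0, rfl⟩
  have hAbdd : BddAbove A := by
    refine ⟨∑ i, Real.log ((M i).choose (W i)), ?_⟩
    rintro y ⟨a, b, c, d, rfl⟩
    rw [ellBB_eq]
    exact Finset.sum_le_sum fun i _ => bbTerm_le _ _ _ _ (hWM i)
  have hBbdd : BddAbove B := hAbdd.mono hBA
  have key : sSup A = sSup B := by
    apply le_antisymm
    · apply csSup_le hAne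
      rintro y ⟨a, b, c, d, rfl⟩
      rw [ellBB_eq, ← Finset.sum_filter_add_sum_filter_not Finset.univ (fun i => X i = 0)]
      have hS0 : (∑ i ∈ Finset.univ.filter (fun i => X i = 0),
          bbTerm (a + b * X i) (c + d * X i) (M i) (W i)) ≤ 0 := by
        apply Finset.sum_nonpos
        intro i hi
        have hXi : X i = 0 := (Finset.mem_filter.mp hi).2
        have hWi : W i = 0 := h0 i hXi
        have hle := bbTerm_le (a + b * X i) (c + d * X i) (M i) (W i) (hWM i)
        rw [hWi, Nat.choose_zero_right, Nat.cast_one, Real.log_one] at hle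
        rw [hWi]
        exact hle
      have hS1eq : (∑ i ∈ Finset.univ.filter (fun i => ¬ X i = 0),
            bbTerm (a + b * X i) (c + d * X i) (M i) (W i))
          = ∑ i ∈ Finset.univ.filter (fun i => ¬ X i = 0),
            bbTerm (a + b) (c + d) (M i) (W i) := by
        refine Finset.sum_congr rfl fun i hi => ?_
        have hXi : X i = 1 := (hX i).resolve_left (Finset.mem_filter.mp hi).2
        rw [hXi, mul_one, mul_one]
      rw [hS1eq]
      have hS1le : (∑ i ∈ Finset.univ.filter (fun i => ¬ X i = 0),
          bbTerm (a + b) (c + d) (M i) (W i)) ≤ sSup B := by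
        apply le_of_forall_sub_le
        intro ε hε
        have htend : Tendsto (fun t => ∑ i ∈ Finset.univ.filter (fun i => X i = 0),
            bbTerm t (c + d) (M i) 0) atBot (nhds 0) := by
          have := tendsto_finset_sum (Finset.univ.filter (fun i : Fin n => X i = 0))
            (fun i _ => bbTerm_zero_tendsto (c + d) (M i))
          simpa using this
        obtain ⟨t, ht⟩ := (htend.eventually (eventually_gt_nhds (neg_lt_zero.mpr hε))).exists
        have hmem : ellBB n M W X t (a + b - t) (c + d) 0 ∈ B := ⟨t, a + b - t, c + d, rfl⟩
        have hle := le_csSup hBbdd hmem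
        have hzeq : ellBB n M W X t (a + b - t) (c + d) 0
            = (∑ i ∈ Finset.univ.filter (fun i => X i = 0), bbTerm t (c + d) (M i) 0)
              + ∑ i ∈ Finset.univ.filter (fun i => ¬ X i = 0),
                  bbTerm (a + b) (c + d) (M i) (W i) := by
          rw [ellBB_eq, ← Finset.sum_filter_add_sum_filter_not Finset.univ (fun i => X i = 0)]
          congr 1
          · refine Finset.sum_congr rfl fun i hi => ?_
            have hXi : X i = 0 := (Finset.mem_filter.mp hi).2
            rw [hXi, h0 i hXi, mul_zero, mul_zero, add_zero, add_zero]
          · refine Finset.sum_congr rfl fun i hi => ?_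
            have hXi : X i = 1 := (hX i).resolve_left (Finset.mem_filter.mp hi).2
            rw [hXi, mul_one, mul_one]
            rw [show t + (a + b - t) = a + b by ring, show c + d + 0 = c + d by ring]
        rw [hzeq] at hle
        linarith
      linarith
    · exact csSup_le_csSup hAbdd hBne hBA
  rw [key]
  ring
end
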